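/- Let E be a finite-dimensional real inner product space, let F_i, F : E → ℝ be differentiable, let λ, μ_F, μ̂ > 0 and L_F, ε, ε₁, γ, σ, η, G ≥ 0, let n ≥ 1 be an integer, and let θ̃, θ*, μ, w, w* ∈ E. Assume: (i) ‖θ̃ − θ*‖² ≤ (2/μ_F²)·(γ²/n + ε²); (ii) λ·(μ − θ*) = ṽ for some ṽ ∈ E with ‖ṽ − ∇F_i(w)‖ ≤ ε₁; (iii) ‖∇F_i(w) − ∇F_i(w*)‖² ≤ 2L_F·(F(w) − F(w*)) and ‖∇F_i(w*)‖² ≤ σ²; (iv) ‖μ − w‖ ≤ η·G; (v) ‖w − w*‖² ≤ (2/μ̂)·(F(w) − F(w*)). Then ‖θ̃ − w*‖² ≤ 4·[(2/μ_F²)(γ²/n + ε²) + (2/λ²)ε₁² + (4/λ²)σ² + η²G²] + (32L_F/λ² + 8/μ̂)·(F(w) − F(w*)). -/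

import Mathlib

open RealInnerProductSpace


private lemma aux_sq_mono {x y : ℝ} (hx : 0 ≤ x) (h : x ≤ y) : x ^ 2 ≤ y ^ 2 := by
  nlinarith

private lemma aux_four_sq (A B C D : ℝ) :
    (A + B + C + D) ^ 2 ≤ 4 * (A ^ 2 + B ^ 2 + C ^ 2 + D ^ 2) := by
  nlinarith [sq_nonneg (A - B), sq_nonneg (A - C), sq_nonneg (A - D),
    sq_nonneg (B - C), sq_nonneg (B - D), sq_nonneg (C - D)]

private lemma aux_three_sq (e p q : ℝ) :
    (e + p + q) ^ 2 ≤ 2 * e ^ 2 + 4 * p ^ 2 + 4 * q ^ 2 := by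
  nlinarith [sq_nonneg (e - p - q), sq_nonneg (p - q)]

/-- Deterministic per-client form of Theorem 2 (pFedBreD's first-order
personalization bound) under the spherical Gaussian prior. -/
theorem personalization_bound
    {E : Type*} [NormedAddCommGroup E] [InnerProductSpace ℝ E] [FiniteDimensional ℝ E]
    (Fi F : E → ℝ) (hFi : Differentiable ℝ Fi) (hF : Differentiable ℝ F)
    (lam μF μhat : ℝ) (hlam : 0 < lam) (hμF : 0 < μF) (hμhat : 0 < μhat)
    (LF ε ε₁ γ σ η G : ℝ) (hLF : 0 ≤ LF) (hε : 0 ≤ ε) (hε₁ : 0 ≤ ε₁)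
    (hγ : 0 ≤ γ) (hσ : 0 ≤ σ) (hη : 0 ≤ η) (hG : 0 ≤ G)
    (n : ℕ) (hn : 1 ≤ n)
    (θtilde θstar μ w wstar : E)
    (h1 : ‖θtilde - θstar‖ ^ 2 ≤ (2 / μF ^ 2) * (γ ^ 2 / n + ε ^ 2))
    (h2 : ∃ vtilde : E, lam • (μ - θstar) = vtilde ∧
      ‖vtilde - gradient Fi w‖ ≤ ε₁)
    (h3a : ‖gradient Fi w - gradient Fi wstar‖ ^ 2 ≤ 2 * LF * (F w - F wstar))
    (h3b : ‖gradient Fi wstar‖ ^ 2 ≤ σ ^ 2)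
    (h4 : ‖μ - w‖ ≤ η * G)
    (h5 : ‖w - wstar‖ ^ 2 ≤ (2 / μhat) * (F w - F wstar)) :
    ‖θtilde - wstar‖ ^ 2
      ≤ 4 * ((2 / μF ^ 2) * (γ ^ 2 / n + ε ^ 2) + (2 / lam ^ 2) * ε₁ ^ 2
            + (4 / lam ^ 2) * σ ^ 2 + η ^ 2 * G ^ 2)
        + (32 * LF / lam ^ 2 + 8 / μhat) * (F w - F wstar) := by
  obtain ⟨v, hv, hv2⟩ := h2
  have hθμ : θstar - μ = (-lam⁻¹) • v := by
    rw [← hv, smul_smul]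
    field_simp
    rw [neg_smul, one_smul, neg_sub]
  have hBnorm : ‖θstar - μ‖ = ‖v‖ / lam := by
    rw [hθμ, norm_smul, norm_neg, norm_inv, Real.norm_eq_abs, abs_of_pos hlam,
      inv_mul_eq_div]
  have hvbound : ‖v‖ ≤ ε₁ + ‖gradient Fi w - gradient Fi wstar‖ + ‖gradient Fi wstar‖ := by
    calc ‖v‖ = ‖(v - gradient Fi w) + (gradient Fi w - gradient Fi wstar)
            + gradient Fi wstar‖ := by congr 1; abel
      _ ≤ ‖(v - gradient Fi w) + (gradient Fi w - gradient Fi wstar)‖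
            + ‖gradient Fi wstar‖ := norm_add_le _ _
      _ ≤ ‖v - gradient Fi w‖ + ‖gradient Fi w - gradient Fi wstar‖
            + ‖gradient Fi wstar‖ := by gcongr; exact norm_add_le _ _
      _ ≤ ε₁ + ‖gradient Fi w - gradient Fi wstar‖ + ‖gradient Fi wstar‖ := by gcongr
  have htri : ‖θtilde - wstar‖ ≤ ‖θtilde - θstar‖ + ‖θstar - μ‖ + ‖μ - w‖ + ‖w - wstar‖ := by
    calc ‖θtilde - wstar‖
        = ‖(θtilde - θstar) + (θstar - μ) + (μ - w) + (w - wstar)‖ := by congr 1; abel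
      _ ≤ ‖(θtilde - θstar) + (θstar - μ) + (μ - w)‖ + ‖w - wstar‖ := norm_add_le _ _
      _ ≤ ‖(θtilde - θstar) + (θstar - μ)‖ + ‖μ - w‖ + ‖w - wstar‖ := by
          gcongr; exact norm_add_le _ _
      _ ≤ ‖θtilde - θstar‖ + ‖θstar - μ‖ + ‖μ - w‖ + ‖w - wstar‖ := by
          gcongr; exact norm_add_le _ _
  rw [hBnorm] at htri
  set A := ‖θtilde - θstar‖ with hA
  set B := ‖v‖ / lam with hBdef
  set C := ‖μ - w‖ with hC
  set D := ‖w - wstar‖ with hD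
  set p := ‖gradient Fi w - gradient Fi wstar‖ with hp
  set q := ‖gradient Fi wstar‖ with hq
  clear_value A B C D p q
  have hA0 : 0 ≤ A := by rw [hA]; positivity
  have hC0 : 0 ≤ C := by rw [hC]; positivity
  have hD0 : 0 ≤ D := by rw [hD]; positivity
  have hp0 : 0 ≤ p := by rw [hp]; positivity
  have hq0 : 0 ≤ q := by rw [hq]; positivity
  have hv0 : 0 ≤ ‖v‖ := norm_nonneg _
  have hT0 : 0 ≤ ‖θtilde - wstar‖ := norm_nonneg _
  have hlam2 : 0 < lam ^ 2 := by positivity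
  have hB0 : 0 ≤ B := by rw [hBdef]; positivity
  have hsq : ‖θtilde - wstar‖ ^ 2 ≤ (A + B + C + D) ^ 2 :=
    aux_sq_mono hT0 htri
  have hBsq : B ^ 2 ≤ (ε₁ + p + q) ^ 2 / lam ^ 2 := by
    rw [hBdef, div_pow]
    gcongr
  have hfin : (A + B + C + D) ^ 2 ≤ 4 * (A ^ 2 + B ^ 2 + C ^ 2 + D ^ 2) :=
    aux_four_sq A B C D
  have hmid : (ε₁ + p + q) ^ 2 ≤ 2 * ε₁ ^ 2 + 4 * p ^ 2 + 4 * q ^ 2 :=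
    aux_three_sq ε₁ p q
  have hBsq2 : B ^ 2 ≤ (2 * ε₁ ^ 2 + 4 * (2 * LF * (F w - F wstar)) + 4 * σ ^ 2) / lam ^ 2 := by
    have step1 : (ε₁ + p + q) ^ 2 / lam ^ 2
        ≤ (2 * ε₁ ^ 2 + 4 * p ^ 2 + 4 * q ^ 2) / lam ^ 2 := by gcongr
    have step2 : (2 * ε₁ ^ 2 + 4 * p ^ 2 + 4 * q ^ 2) / lam ^ 2
        ≤ (2 * ε₁ ^ 2 + 4 * (2 * LF * (F w - F wstar)) + 4 * σ ^ 2) / lam ^ 2 := by gcongr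
    exact hBsq.trans (step1.trans step2)
  have hC2 : C ^ 2 ≤ η ^ 2 * G ^ 2 := by
    have := aux_sq_mono hC0 h4
    calc C ^ 2 ≤ (η * G) ^ 2 := this
      _ = η ^ 2 * G ^ 2 := by ring
  calc ‖θtilde - wstar‖ ^ 2 ≤ 4 * (A ^ 2 + B ^ 2 + C ^ 2 + D ^ 2) :=
        hsq.trans hfin
    _ ≤ 4 * ((2 / μF ^ 2) * (γ ^ 2 / n + ε ^ 2)
          + (2 * ε₁ ^ 2 + 4 * (2 * LF * (F w - F wstar)) + 4 * σ ^ 2) / lam ^ 2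
          + η ^ 2 * G ^ 2 + (2 / μhat) * (F w - F wstar)) := by
        gcongr 4 * (?_ + ?_ + ?_ + ?_) <;> assumption
    _ = 4 * ((2 / μF ^ 2) * (γ ^ 2 / n + ε ^ 2) + (2 / lam ^ 2) * ε₁ ^ 2
            + (4 / lam ^ 2) * σ ^ 2 + η ^ 2 * G ^ 2)
        + (32 * LF / lam ^ 2 + 8 / μhat) * (F w - F wstar) := by
        field_simp
        ring
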